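/- Under Assumptions IV, weak monotonicity, and linearity of the instrument propensity score e(X) = E[Z|X] in X, the linear IV estimand satisfies β_IV = E[c(X)·π(X)·Var[Z|X]·τ(X)] / E[c(X)·π(X)·Var[Z|X]], where c(x) ∈ {−1,1} equals 1 on the complier region and −1 on the defier region. (Theorem 2.) -/

import Mathlib

open Finset

section Defs

variable {Ω 𝓧 : Type*} [Fintype Ω]

/-- Expectation of `f` under weights `p` on a finite outcome space. -/
noncomputable def pexp (p : Ω → ℝ) (f : Ω → ℝ) : ℝ := ∑ ω, p ω * f ω

open Classical in
/-- Probability of the event `A` under weights `p`. -/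
noncomputable def pprob (p : Ω → ℝ) (A : Ω → Prop) : ℝ := ∑ ω, if A ω then p ω else 0

open Classical in
/-- Conditional expectation of `f` given the event `A`. -/
noncomputable def eexp (p : Ω → ℝ) (A : Ω → Prop) (f : Ω → ℝ) : ℝ :=
  (∑ ω, if A ω then p ω * f ω else 0) / pprob p A

/-- Conditional probability of `A` given `B`. -/
noncomputable def cprob (p : Ω → ℝ) (A B : Ω → Prop) : ℝ :=
  pprob p (fun ω => A ω ∧ B ω) / pprob p B

/-- `p` is a probability vector. -/
def IsProb (p : Ω → ℝ) : Prop := (∀ ω, 0 ≤ p ω) ∧ ∑ ω, p ω = 1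

/-- Conditional expectation of `f` given `X = x`. -/
noncomputable def condMean (p : Ω → ℝ) (X : Ω → 𝓧) (f : Ω → ℝ) (x : 𝓧) : ℝ :=
  eexp p (fun ω => X ω = x) f

/-- Conditional expectation of `f` given `X = x` and `Z = z`. -/
noncomputable def condMeanOn (p : Ω → ℝ) (X : Ω → 𝓧) (Z : Ω → ℝ) (f : Ω → ℝ) (x : 𝓧) (z : ℝ) : ℝ :=
  eexp p (fun ω => X ω = x ∧ Z ω = z) f

/-- Conditional cslope coefficient `E[f | Z=1, X=x] - E[f | Z=0, X=x]`. -/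
noncomputable def cslope (p : Ω → ℝ) (X : Ω → 𝓧) (Z : Ω → ℝ) (f : Ω → ℝ) (x : 𝓧) : ℝ :=
  condMeanOn p X Z f x 1 - condMeanOn p X Z f x 0

/-- Conditional variance of `f` given the event `A`. -/
noncomputable def evVar (p : Ω → ℝ) (A : Ω → Prop) (f : Ω → ℝ) : ℝ :=
  eexp p A (fun ω => (f ω - eexp p A f) ^ 2)

/-- Conditional variance of `f` given `X = x`. -/
noncomputable def condVar (p : Ω → ℝ) (X : Ω → 𝓧) (f : Ω → ℝ) (x : 𝓧) : ℝ :=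
  evVar p (fun ω => X ω = x) f

end Defs


lemma sum_fiber' {Ω β : Type*} [Fintype Ω] [DecidableEq β] (φ : Ω → β) (F : Ω → ℝ) :
    ∑ ω, F ω = ∑ b ∈ Finset.univ.image φ, ∑ ω ∈ Finset.univ.filter (fun ω => φ ω = b), F ω :=
  (Finset.sum_fiberwise_of_maps_to (fun ω _ => Finset.mem_image_of_mem φ (Finset.mem_univ ω)) F).symm

lemma quad_min' {B C : ℝ} (h : ∀ t : ℝ, 0 ≤ t ^ 2 * C - 2 * t * B) : B = 0 := by
  rcases le_or_gt C 0 with hC | hC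
  · have h1 := h 1
    have h2 := h (-1)
    nlinarith
  · have h3 := h (B / C)
    have hne : C ≠ 0 := ne_of_gt hC
    have he : (B / C) ^ 2 * C - 2 * (B / C) * B = -(B ^ 2 / C) := by
      field_simp; ring
    rw [he] at h3
    have h4 : B ^ 2 / C ≤ 0 := by linarith
    have h5 : B ^ 2 ≤ 0 := by
      by_contra h6
      push_neg at h6
      exact absurd (div_pos h6 hC) (not_lt.2 h4)
    have : B ^ 2 = 0 := le_antisymm h5 (sq_nonneg B)
    exact pow_eq_zero_iff (by norm_num) |>.mp this

lemma pprob_nonneg' {Ω : Type*} [Fintype Ω] {p : Ω → ℝ} (hp0 : ∀ ω, 0 ≤ p ω) (A : Ω → Prop) :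
    0 ≤ pprob p A := by
  classical
  unfold pprob
  apply Finset.sum_nonneg
  intro ω _
  split <;> simp [hp0 ω]

lemma pprob_zero_support' {Ω : Type*} [Fintype Ω] {p : Ω → ℝ} (hp0 : ∀ ω, 0 ≤ p ω)
    {A : Ω → Prop} (h : pprob p A = 0) {ω : Ω} (hA : A ω) : p ω = 0 := by
  classical
  unfold pprob at h
  have key := (Finset.sum_eq_zero_iff_of_nonneg
    (fun ω _ => by split <;> simp [hp0 ω] : ∀ ω ∈ Finset.univ, 0 ≤ if A ω then p ω else 0)).mp h
  have := key ω (Finset.mem_univ ω)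
  rwa [if_pos hA] at this

lemma pprob_eq {Ω : Type*} [Fintype Ω] (p : Ω → ℝ) (A : Ω → Prop) [DecidablePred A] :
    pprob p A = ∑ ω, if A ω then p ω else 0 := by
  unfold pprob
  exact Finset.sum_congr rfl fun ω _ => by congr

lemma eexp_eq {Ω : Type*} [Fintype Ω] (p : Ω → ℝ) (A : Ω → Prop) [DecidablePred A] (f : Ω → ℝ) :
    eexp p A f = (∑ ω, if A ω then p ω * f ω else 0) / pprob p A := by
  unfold eexp
  congr 1
  exact Finset.sum_congr rfl fun ω _ => by congr

lemma foc' {Ω : Type*} [Fintype Ω] (p R V : Ω → ℝ)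
    (h : ∀ t : ℝ, pexp p (fun ω => (R ω) ^ 2) ≤ pexp p (fun ω => (R ω - t * V ω) ^ 2)) :
    ∑ ω, p ω * (R ω * V ω) = 0 := by
  apply quad_min' (C := ∑ ω, p ω * (V ω) ^ 2)
  intro t
  have h1 := h t
  have expand : pexp p (fun ω => (R ω - t * V ω) ^ 2)
      = pexp p (fun ω => (R ω) ^ 2)
        + (t ^ 2 * (∑ ω, p ω * (V ω) ^ 2) - 2 * t * (∑ ω, p ω * (R ω * V ω))) := by
    unfold pexp
    rw [Finset.mul_sum, Finset.mul_sum, ← Finset.sum_sub_distrib, ← Finset.sum_add_distrib]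
    apply Finset.sum_congr rfl
    intro ω _
    ring
  rw [expand] at h1
  linarith

/-- Theorem 2: under Assumption IV, weak monotonicity, and a
linear instrument propensity score, the just-identified linear IV estimand
satisfies `β_IV = E[c(X)·π(X)·Var[Z|X]·τ(X)] / E[c(X)·π(X)·Var[Z|X]]`,
where `c(x) ∈ {-1,1}` is the sign distinguishing complier and defier regions. -/
theorem stmt9 {Ω : Type*} [Fintype Ω] {k : ℕ} (p : Ω → ℝ) (hp : IsProb p)
    (X : Ω → Fin k → ℝ) (Z D0 D1 Y0 Y1 : Ω → ℝ)
    (hZ : ∀ ω, Z ω = 0 ∨ Z ω = 1)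
    (hD0 : ∀ ω, D0 ω = 0 ∨ D0 ω = 1) (hD1 : ∀ ω, D1 ω = 0 ∨ D1 ω = 1)
    (hindep : ∀ (x : Fin k → ℝ) (y0 y1 d0 d1 z : ℝ),
      pprob p (fun ω => X ω = x ∧ Y0 ω = y0 ∧ Y1 ω = y1 ∧ D0 ω = d0 ∧ D1 ω = d1 ∧ Z ω = z) *
          pprob p (fun ω => X ω = x)
        = pprob p (fun ω => X ω = x ∧ Y0 ω = y0 ∧ Y1 ω = y1 ∧ D0 ω = d0 ∧ D1 ω = d1) *
            pprob p (fun ω => X ω = x ∧ Z ω = z))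
    (hrel : ∀ x : Fin k → ℝ, 0 < pprob p (fun ω => X ω = x) →
      0 < cprob p (fun ω => Z ω = 1) (fun ω => X ω = x) ∧
      cprob p (fun ω => Z ω = 1) (fun ω => X ω = x) < 1 ∧
      0 < cprob p (fun ω => D1 ω ≠ D0 ω) (fun ω => X ω = x))
    (hmono : ∀ x : Fin k → ℝ,
      (∀ ω, 0 < p ω → X ω = x → D0 ω ≤ D1 ω) ∨
      (∀ ω, 0 < p ω → X ω = x → D1 ω ≤ D0 ω))
    (D Y : Ω → ℝ)
    (hD : ∀ ω, D ω = if Z ω = 1 then D1 ω else D0 ω)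
    (hY : ∀ ω, Y ω = if D ω = 1 then Y1 ω else Y0 ω)
    -- linear instrument propensity score
    (α : Fin k → ℝ)
    (hlin : ∀ x : Fin k → ℝ, 0 < pprob p (fun ω => X ω = x) →
      condMean p X Z x = ∑ j, x j * α j)
    -- β_IV as the ratio of the reduced-form and first-stage coefficients on Z
    (bY : ℝ) (gY : Fin k → ℝ)
    (hbY : ∀ (b' : ℝ) (g' : Fin k → ℝ),
      pexp p (fun ω => (Y ω - Z ω * bY - ∑ j, X ω j * gY j) ^ 2) ≤
        pexp p (fun ω => (Y ω - Z ω * b' - ∑ j, X ω j * g' j) ^ 2))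
    (bD : ℝ) (gD : Fin k → ℝ)
    (hbD : ∀ (b' : ℝ) (g' : Fin k → ℝ),
      pexp p (fun ω => (D ω - Z ω * bD - ∑ j, X ω j * gD j) ^ 2) ≤
        pexp p (fun ω => (D ω - Z ω * b' - ∑ j, X ω j * g' j) ^ 2)) :
    bY / bD =
      pexp p (fun ω =>
          Real.sign (cprob p (fun ω' => D0 ω' ≤ D1 ω') (fun ω' => X ω' = X ω) -
              cprob p (fun ω' => D1 ω' ≤ D0 ω') (fun ω' => X ω' = X ω)) *
            cprob p (fun ω' => D1 ω' ≠ D0 ω') (fun ω' => X ω' = X ω) *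
            condVar p X Z (X ω) *
            eexp p (fun ω' => D1 ω' ≠ D0 ω' ∧ X ω' = X ω) (fun ω' => Y1 ω' - Y0 ω')) /
        pexp p (fun ω =>
          Real.sign (cprob p (fun ω' => D0 ω' ≤ D1 ω') (fun ω' => X ω' = X ω) -
              cprob p (fun ω' => D1 ω' ≤ D0 ω') (fun ω' => X ω' = X ω)) *
            cprob p (fun ω' => D1 ω' ≠ D0 ω') (fun ω' => X ω' = X ω) *
            condVar p X Z (X ω)) := by
  obtain ⟨hp0, hp1⟩ := hp
  set e : (Fin k → ℝ) → ℝ := fun x => ∑ j, x j * α j with he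
  have hPnn : ∀ A : Ω → Prop, 0 ≤ pprob p A := fun A => pprob_nonneg' hp0 A
  have hsupp : ∀ x : Fin k → ℝ, pprob p (fun ω => X ω = x) = 0 → ∀ ω, X ω = x → p ω = 0 :=
    fun x hx ω hω => pprob_zero_support' hp0 hx hω
  -- fiber sum of p·Z equals joint probability with Z = 1
  have hZfiber : ∀ x : Fin k → ℝ, (∑ ω, if X ω = x then p ω * Z ω else 0)
      = pprob p (fun ω => X ω = x ∧ Z ω = 1) := by
    intro x
    rw [pprob_eq]
    apply Finset.sum_congr rfl
    intro ω _
    rcases hZ ω with h | h <;> by_cases hx : X ω = x <;> simp [h, hx]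
  -- conditional mean of Z is e x on positive-probability fibers
  have hCM : ∀ x : Fin k → ℝ, 0 < pprob p (fun ω => X ω = x) →
      (∑ ω, if X ω = x then p ω * Z ω else 0) = e x * pprob p (fun ω => X ω = x) := by
    intro x hP
    have h1 := hlin x hP
    unfold condMean at h1
    rw [eexp_eq] at h1
    rw [div_eq_iff (ne_of_gt hP)] at h1
    simpa [he] using h1
  -- conditional-mean-zero of Z - e(X) on every fiber
  have hCMZ : ∀ x : Fin k → ℝ, (∑ ω, if X ω = x then p ω * (Z ω - e x) else 0) = 0 := by
    intro x
    rcases (hPnn (fun ω => X ω = x)).eq_or_lt with hP | hP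
    · apply Finset.sum_eq_zero
      intro ω _
      by_cases hx : X ω = x
      · rw [if_pos hx, hsupp x hP.symm ω hx, zero_mul]
      · rw [if_neg hx]
    · have hsplit : (∑ ω, if X ω = x then p ω * (Z ω - e x) else 0)
          = (∑ ω, if X ω = x then p ω * Z ω else 0) - e x * pprob p (fun ω => X ω = x) := by
        rw [pprob_eq, Finset.mul_sum, ← Finset.sum_sub_distrib]
        apply Finset.sum_congr rfl
        intro ω _
        by_cases hx : X ω = x <;> simp [hx] <;> ring
      rw [hsplit, hCM x hP, sub_self]
  -- orthogonality of Z - e(X) to any function of X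
  have orth : ∀ f : (Fin k → ℝ) → ℝ, ∑ ω, p ω * ((Z ω - e (X ω)) * f (X ω)) = 0 := by
    intro f
    rw [sum_fiber' X]
    apply Finset.sum_eq_zero
    intro x _
    have h1 : ∀ ω ∈ Finset.univ.filter (fun ω => X ω = x),
        p ω * ((Z ω - e (X ω)) * f (X ω)) = (p ω * (Z ω - e x)) * f x := by
      intro ω hω
      rw [(Finset.mem_filter.1 hω).2]
      ring
    rw [Finset.sum_congr rfl h1, ← Finset.sum_mul, Finset.sum_filter, hCMZ x, zero_mul]
  -- residuals
  set RY : Ω → ℝ := fun ω => Y ω - Z ω * bY - ∑ j, X ω j * gY j with hRY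
  set RD : Ω → ℝ := fun ω => D ω - Z ω * bD - ∑ j, X ω j * gD j with hRD
  set Zt : Ω → ℝ := fun ω => Z ω - e (X ω) with hZt
  have hfun0Y : (fun ω => (Y ω - Z ω * bY - ∑ j, X ω j * gY j) ^ 2) = fun ω => (RY ω) ^ 2 := by
    funext ω
    simp only [hRY]
  have hfun0D : (fun ω => (D ω - Z ω * bD - ∑ j, X ω j * gD j) ^ 2) = fun ω => (RD ω) ^ 2 := by
    funext ω
    simp only [hRD]
  -- first-order conditions
  have hRZ_Y : ∑ ω, p ω * (RY ω * Z ω) = 0 := by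
    apply foc' p RY Z
    intro t
    have h := hbY (bY + t) gY
    have hfun : (fun ω => (Y ω - Z ω * (bY + t) - ∑ j, X ω j * gY j) ^ 2)
        = fun ω => (RY ω - t * Z ω) ^ 2 := by
      funext ω
      simp only [hRY]
      ring
    rwa [hfun0Y, hfun] at h
  have hRZ_D : ∑ ω, p ω * (RD ω * Z ω) = 0 := by
    apply foc' p RD Z
    intro t
    have h := hbD (bD + t) gD
    have hfun : (fun ω => (D ω - Z ω * (bD + t) - ∑ j, X ω j * gD j) ^ 2)
        = fun ω => (RD ω - t * Z ω) ^ 2 := by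
      funext ω
      simp only [hRD]
      ring
    rwa [hfun0D, hfun] at h
  have hRX_Y : ∀ j, ∑ ω, p ω * (RY ω * X ω j) = 0 := by
    intro j
    apply foc' p RY (fun ω => X ω j)
    intro t
    have h := hbY bY (fun i => gY i + t * (if i = j then 1 else 0))
    have hfun : (fun ω => (Y ω - Z ω * bY - ∑ i, X ω i * (gY i + t * (if i = j then 1 else 0))) ^ 2)
        = fun ω => (RY ω - t * X ω j) ^ 2 := by
      funext ω
      have hsum : (∑ i, X ω i * (gY i + t * (if i = j then 1 else 0)))
          = (∑ i, X ω i * gY i) + t * X ω j := by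
        have hterm : ∀ i ∈ Finset.univ, X ω i * (gY i + t * (if i = j then 1 else 0))
            = X ω i * gY i + t * (if i = j then X ω i else 0) := by
          intro i _
          by_cases h : i = j <;> simp [h] <;> ring
        rw [Finset.sum_congr rfl hterm, Finset.sum_add_distrib, ← Finset.mul_sum,
          Finset.sum_ite_eq' Finset.univ j (X ω)]
        simp
      simp only [hRY]
      rw [hsum]
      ring
    rwa [hfun0Y, hfun] at h
  have hRX_D : ∀ j, ∑ ω, p ω * (RD ω * X ω j) = 0 := by
    intro j
    apply foc' p RD (fun ω => X ω j)
    intro t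
    have h := hbD bD (fun i => gD i + t * (if i = j then 1 else 0))
    have hfun : (fun ω => (D ω - Z ω * bD - ∑ i, X ω i * (gD i + t * (if i = j then 1 else 0))) ^ 2)
        = fun ω => (RD ω - t * X ω j) ^ 2 := by
      funext ω
      have hsum : (∑ i, X ω i * (gD i + t * (if i = j then 1 else 0)))
          = (∑ i, X ω i * gD i) + t * X ω j := by
        have hterm : ∀ i ∈ Finset.univ, X ω i * (gD i + t * (if i = j then 1 else 0))
            = X ω i * gD i + t * (if i = j then X ω i else 0) := by
          intro i _
          by_cases h : i = j <;> simp [h] <;> ring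
        rw [Finset.sum_congr rfl hterm, Finset.sum_add_distrib, ← Finset.mul_sum,
          Finset.sum_ite_eq' Finset.univ j (X ω)]
        simp
      simp only [hRD]
      rw [hsum]
      ring
    rwa [hfun0D, hfun] at h
  -- orthogonality to e(X)
  have hRe_Y : ∑ ω, p ω * (RY ω * e (X ω)) = 0 := by
    have hs : ∑ ω, p ω * (RY ω * e (X ω)) = ∑ j, α j * ∑ ω, p ω * (RY ω * X ω j) := by
      have h1 : ∀ ω ∈ Finset.univ, p ω * (RY ω * e (X ω))
          = ∑ j, α j * (p ω * (RY ω * X ω j)) := by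
        intro ω _
        simp only [he, Finset.mul_sum]
        apply Finset.sum_congr rfl
        intro j _
        ring
      rw [Finset.sum_congr rfl h1, Finset.sum_comm]
      apply Finset.sum_congr rfl
      intro j _
      rw [Finset.mul_sum]
    rw [hs]
    apply Finset.sum_eq_zero
    intro j _
    rw [hRX_Y j, mul_zero]
  have hRe_D : ∑ ω, p ω * (RD ω * e (X ω)) = 0 := by
    have hs : ∑ ω, p ω * (RD ω * e (X ω)) = ∑ j, α j * ∑ ω, p ω * (RD ω * X ω j) := by
      have h1 : ∀ ω ∈ Finset.univ, p ω * (RD ω * e (X ω))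
          = ∑ j, α j * (p ω * (RD ω * X ω j)) := by
        intro ω _
        simp only [he, Finset.mul_sum]
        apply Finset.sum_congr rfl
        intro j _
        ring
      rw [Finset.sum_congr rfl h1, Finset.sum_comm]
      apply Finset.sum_congr rfl
      intro j _
      rw [Finset.mul_sum]
    rw [hs]
    apply Finset.sum_eq_zero
    intro j _
    rw [hRX_D j, mul_zero]
  have hRZt_Y : ∑ ω, p ω * (RY ω * Zt ω) = 0 := by
    have h1 : ∀ ω ∈ Finset.univ, p ω * (RY ω * Zt ω)
        = p ω * (RY ω * Z ω) - p ω * (RY ω * e (X ω)) := by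
      intro ω _
      simp only [hZt]
      ring
    rw [Finset.sum_congr rfl h1, Finset.sum_sub_distrib, hRZ_Y, hRe_Y, sub_zero]
  have hRZt_D : ∑ ω, p ω * (RD ω * Zt ω) = 0 := by
    have h1 : ∀ ω ∈ Finset.univ, p ω * (RD ω * Zt ω)
        = p ω * (RD ω * Z ω) - p ω * (RD ω * e (X ω)) := by
      intro ω _
      simp only [hZt]
      ring
    rw [Finset.sum_congr rfl h1, Finset.sum_sub_distrib, hRZ_D, hRe_D, sub_zero]
  have o1 : ∑ ω, p ω * ((Z ω - e (X ω)) * e (X ω)) = 0 := orth e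
  have o2Y : ∑ ω, p ω * ((Z ω - e (X ω)) * (∑ j, X ω j * gY j)) = 0 := by
    simpa only [] using orth (fun x => ∑ j, x j * gY j)
  have o2D : ∑ ω, p ω * ((Z ω - e (X ω)) * (∑ j, X ω j * gD j)) = 0 := by
    simpa only [] using orth (fun x => ∑ j, x j * gD j)
  have hYb : ∑ ω, p ω * (Y ω * Zt ω) = bY * ∑ ω, p ω * (Zt ω) ^ 2 := by
    have hsplit : ∀ ω ∈ Finset.univ, p ω * (Y ω * Zt ω)
        = p ω * (RY ω * Zt ω) + bY * (p ω * (Zt ω) ^ 2)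
          + bY * (p ω * ((Z ω - e (X ω)) * e (X ω)))
          + p ω * ((Z ω - e (X ω)) * (∑ j, X ω j * gY j)) := by
      intro ω _
      simp only [hRY, hZt]
      ring
    rw [Finset.sum_congr rfl hsplit, Finset.sum_add_distrib, Finset.sum_add_distrib,
      Finset.sum_add_distrib, ← Finset.mul_sum, ← Finset.mul_sum, hRZt_Y, o1, o2Y]
    ring
  have hDb : ∑ ω, p ω * (D ω * Zt ω) = bD * ∑ ω, p ω * (Zt ω) ^ 2 := by
    have hsplit : ∀ ω ∈ Finset.univ, p ω * (D ω * Zt ω)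
        = p ω * (RD ω * Zt ω) + bD * (p ω * (Zt ω) ^ 2)
          + bD * (p ω * ((Z ω - e (X ω)) * e (X ω)))
          + p ω * ((Z ω - e (X ω)) * (∑ j, X ω j * gD j)) := by
      intro ω _
      simp only [hRD, hZt]
      ring
    rw [Finset.sum_congr rfl hsplit, Finset.sum_add_distrib, Finset.sum_add_distrib,
      Finset.sum_add_distrib, ← Finset.mul_sum, ← Finset.mul_sum, hRZt_D, o1, o2D]
    ring
  -- pprob and-comm
  have hcomm : ∀ (A B : Ω → Prop), pprob p (fun ω => A ω ∧ B ω) = pprob p (fun ω => B ω ∧ A ω) := by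
    intro A B
    unfold pprob
    exact Finset.sum_congr rfl fun ω _ => by
      beta_reduce
      rw [show (A ω ∧ B ω) = (B ω ∧ A ω) from propext and_comm]
  -- e x equals the propensity score
  have hecp : ∀ x : Fin k → ℝ, 0 < pprob p (fun ω => X ω = x) →
      e x = cprob p (fun ω => Z ω = 1) (fun ω => X ω = x) := by
    intro x hP
    unfold cprob
    rw [eq_div_iff (ne_of_gt hP), hcomm (fun ω => Z ω = 1) (fun ω => X ω = x),
      ← hZfiber x, hCM x hP]
  -- positivity of the residual variance
  obtain ⟨ω₀, hω₀⟩ : ∃ ω, p ω ≠ 0 := by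
    by_contra hc
    push_neg at hc
    rw [Finset.sum_eq_zero (fun ω _ => hc ω)] at hp1
    norm_num at hp1
  have hpω₀ : 0 < p ω₀ := (hp0 ω₀).lt_of_ne (Ne.symm hω₀)
  have hPx₀ : 0 < pprob p (fun ω => X ω = X ω₀) := by
    rw [pprob_eq]
    calc (0:ℝ) < p ω₀ := hpω₀
      _ = (if X ω₀ = X ω₀ then p ω₀ else 0) := by rw [if_pos rfl]
      _ ≤ ∑ ω, if X ω = X ω₀ then p ω else 0 :=
          Finset.single_le_sum (fun i _ => by
            show (0:ℝ) ≤ if X i = X ω₀ then p i else 0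
            by_cases h : X i = X ω₀
            · rw [if_pos h]; exact hp0 i
            · rw [if_neg h]) (Finset.mem_univ ω₀)
  obtain ⟨he1, he2, hπ0⟩ := hrel (X ω₀) hPx₀
  have h01 : 0 < e (X ω₀) ∧ e (X ω₀) < 1 := by
    rw [hecp _ hPx₀]
    exact ⟨he1, he2⟩
  have hZtsq : 0 < (Zt ω₀) ^ 2 := by
    simp only [hZt]
    rcases hZ ω₀ with h | h <;> rw [h] <;> nlinarith [h01.1, h01.2]
  have hV : 0 < ∑ ω, p ω * (Zt ω) ^ 2 := by
    calc (0:ℝ) < p ω₀ * (Zt ω₀) ^ 2 := mul_pos hpω₀ hZtsq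
      _ ≤ ∑ ω, p ω * (Zt ω) ^ 2 :=
          Finset.single_le_sum (fun i _ => mul_nonneg (hp0 i) (sq_nonneg _)) (Finset.mem_univ ω₀)
  -- reduce β_IV to ratio of covariances
  have key : bY / bD = (∑ ω, p ω * (Y ω * Zt ω)) / (∑ ω, p ω * (D ω * Zt ω)) := by
    have h1 : (bY * ∑ ω, p ω * (Zt ω) ^ 2) / (bD * ∑ ω, p ω * (Zt ω) ^ 2) = bY / bD := by
      rw [mul_comm bY, mul_comm bD, mul_div_mul_left bY bD (ne_of_gt hV)]
    rw [← h1, ← hYb, ← hDb]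
  rw [key]
  -- conditional independence consequence: E[Z f(W) g(X)] = E[e(X) f(W) g(X)]
  set φ5 : Ω → (Fin k → ℝ) × ℝ × ℝ × ℝ × ℝ := fun ω => (X ω, Y0 ω, Y1 ω, D0 ω, D1 ω) with hφ5
  have star : ∀ (f : ℝ → ℝ → ℝ → ℝ → ℝ) (g : (Fin k → ℝ) → ℝ),
      ∑ ω, p ω * (Z ω * f (Y0 ω) (Y1 ω) (D0 ω) (D1 ω) * g (X ω))
        = ∑ ω, p ω * (e (X ω) * f (Y0 ω) (Y1 ω) (D0 ω) (D1 ω) * g (X ω)) := by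
    intro f g
    rw [sum_fiber' φ5 (fun ω => p ω * (Z ω * f (Y0 ω) (Y1 ω) (D0 ω) (D1 ω) * g (X ω))),
      sum_fiber' φ5 (fun ω => p ω * (e (X ω) * f (Y0 ω) (Y1 ω) (D0 ω) (D1 ω) * g (X ω)))]
    apply Finset.sum_congr rfl
    intro b _
    obtain ⟨x, y0, y1, d0, d1⟩ := b
    have hmem : ∀ ω ∈ Finset.univ.filter (fun ω => φ5 ω = (x, y0, y1, d0, d1)),
        X ω = x ∧ Y0 ω = y0 ∧ Y1 ω = y1 ∧ D0 ω = d0 ∧ D1 ω = d1 := by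
      intro ω hω
      have h := (Finset.mem_filter.1 hω).2
      simp only [hφ5, Prod.ext_iff] at h
      exact ⟨h.1, h.2.1, h.2.2.1, h.2.2.2.1, h.2.2.2.2⟩
    have hL : ∑ ω ∈ Finset.univ.filter (fun ω => φ5 ω = (x, y0, y1, d0, d1)), p ω * Z ω
        = pprob p (fun ω => X ω = x ∧ Y0 ω = y0 ∧ Y1 ω = y1 ∧ D0 ω = d0 ∧ D1 ω = d1 ∧ Z ω = 1) := by
      rw [Finset.sum_filter, pprob_eq]
      apply Finset.sum_congr rfl
      intro ω _
      by_cases hc : φ5 ω = (x, y0, y1, d0, d1)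
      · obtain ⟨h1, h2, h3, h4, h5⟩ : X ω = x ∧ Y0 ω = y0 ∧ Y1 ω = y1 ∧ D0 ω = d0 ∧ D1 ω = d1 := by
          simp only [hφ5, Prod.ext_iff] at hc
          exact ⟨hc.1, hc.2.1, hc.2.2.1, hc.2.2.2.1, hc.2.2.2.2⟩
        rw [if_pos hc]
        rcases hZ ω with hz | hz
        · rw [if_neg (by rintro ⟨-, -, -, -, -, hz1⟩; rw [hz] at hz1; norm_num at hz1), hz, mul_zero]
        · rw [if_pos ⟨h1, h2, h3, h4, h5, hz⟩, hz, mul_one]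
      · rw [if_neg hc, if_neg (by
          rintro ⟨h1, h2, h3, h4, h5, -⟩
          exact hc (by simp only [hφ5, Prod.ext_iff]; exact ⟨h1, h2, h3, h4, h5⟩))]
    have hR : ∑ ω ∈ Finset.univ.filter (fun ω => φ5 ω = (x, y0, y1, d0, d1)), p ω
        = pprob p (fun ω => X ω = x ∧ Y0 ω = y0 ∧ Y1 ω = y1 ∧ D0 ω = d0 ∧ D1 ω = d1) := by
      rw [Finset.sum_filter, pprob_eq]
      apply Finset.sum_congr rfl
      intro ω _
      refine if_congr ?_ rfl rfl
      simp only [hφ5, Prod.ext_iff]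
    have hkey : ∑ ω ∈ Finset.univ.filter (fun ω => φ5 ω = (x, y0, y1, d0, d1)), p ω * Z ω
        = e x * ∑ ω ∈ Finset.univ.filter (fun ω => φ5 ω = (x, y0, y1, d0, d1)), p ω := by
      rcases (hPnn (fun ω => X ω = x)).eq_or_lt with hP | hP
      · have hz : ∀ ω ∈ Finset.univ.filter (fun ω => φ5 ω = (x, y0, y1, d0, d1)), p ω = 0 :=
          fun ω hω => hsupp x hP.symm ω (hmem ω hω).1
        have e1 : ∑ ω ∈ Finset.univ.filter (fun ω => φ5 ω = (x, y0, y1, d0, d1)), p ω * Z ω = 0 :=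
          Finset.sum_eq_zero (fun ω hω => by rw [hz ω hω, zero_mul])
        have e2 : ∑ ω ∈ Finset.univ.filter (fun ω => φ5 ω = (x, y0, y1, d0, d1)), p ω = 0 :=
          Finset.sum_eq_zero hz
        rw [e1, e2, mul_zero]
      · have hind := hindep x y0 y1 d0 d1 1
        have hez : pprob p (fun ω => X ω = x ∧ Z ω = 1) = e x * pprob p (fun ω => X ω = x) := by
          rw [← hZfiber x, hCM x hP]
        rw [hez] at hind
        have hc : (pprob p (fun ω => X ω = x ∧ Y0 ω = y0 ∧ Y1 ω = y1 ∧ D0 ω = d0 ∧ D1 ω = d1 ∧ Z ω = 1))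
              * pprob p (fun ω => X ω = x)
            = (e x * pprob p (fun ω => X ω = x ∧ Y0 ω = y0 ∧ Y1 ω = y1 ∧ D0 ω = d0 ∧ D1 ω = d1))
              * pprob p (fun ω => X ω = x) := by
          rw [hind]
          ring
        have hcc := mul_right_cancel₀ (ne_of_gt hP) hc
        rw [hL, hR, hcc]
    have hLrw : ∀ ω ∈ Finset.univ.filter (fun ω => φ5 ω = (x, y0, y1, d0, d1)),
        p ω * (Z ω * f (Y0 ω) (Y1 ω) (D0 ω) (D1 ω) * g (X ω))
          = (p ω * Z ω) * (f y0 y1 d0 d1 * g x) := by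
      intro ω hω
      obtain ⟨h1, h2, h3, h4, h5⟩ := hmem ω hω
      rw [h1, h2, h3, h4, h5]
      ring
    have hRrw : ∀ ω ∈ Finset.univ.filter (fun ω => φ5 ω = (x, y0, y1, d0, d1)),
        p ω * (e (X ω) * f (Y0 ω) (Y1 ω) (D0 ω) (D1 ω) * g (X ω))
          = p ω * (e x * (f y0 y1 d0 d1 * g x)) := by
      intro ω hω
      obtain ⟨h1, h2, h3, h4, h5⟩ := hmem ω hω
      rw [h1, h2, h3, h4, h5]
      ring
    rw [Finset.sum_congr rfl hLrw, Finset.sum_congr rfl hRrw, ← Finset.sum_mul,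
      ← Finset.sum_mul, hkey]
    ring
  -- rewrite E[D Zt] and E[Y Zt] via independence
  have s1 : ∑ ω, p ω * (Z ω * D1 ω * (1 - e (X ω))) = ∑ ω, p ω * (e (X ω) * D1 ω * (1 - e (X ω))) := by
    simpa only [] using star (fun _ _ _ d1 => d1) (fun x => 1 - e x)
  have s2 : ∑ ω, p ω * (Z ω * D0 ω * e (X ω)) = ∑ ω, p ω * (e (X ω) * D0 ω * e (X ω)) := by
    simpa only [] using star (fun _ _ d0 _ => d0) e
  have s3 : ∑ ω, p ω * (Z ω * (Y1 ω * D1 ω + Y0 ω * (1 - D1 ω)) * (1 - e (X ω)))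
      = ∑ ω, p ω * (e (X ω) * (Y1 ω * D1 ω + Y0 ω * (1 - D1 ω)) * (1 - e (X ω))) := by
    simpa only [] using star (fun y0 y1 _ d1 => y1 * d1 + y0 * (1 - d1)) (fun x => 1 - e x)
  have s4 : ∑ ω, p ω * (Z ω * (Y1 ω * D0 ω + Y0 ω * (1 - D0 ω)) * e (X ω))
      = ∑ ω, p ω * (e (X ω) * (Y1 ω * D0 ω + Y0 ω * (1 - D0 ω)) * e (X ω)) := by
    simpa only [] using star (fun y0 y1 d0 _ => y1 * d0 + y0 * (1 - d0)) e
  have hNd : ∑ ω, p ω * (D ω * Zt ω) = ∑ ω, p ω * (e (X ω) * (1 - e (X ω)) * (D1 ω - D0 ω)) := by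
    have split : ∀ ω ∈ Finset.univ, p ω * (D ω * Zt ω)
        = p ω * (Z ω * D1 ω * (1 - e (X ω))) + p ω * (Z ω * D0 ω * e (X ω))
          - p ω * (D0 ω * e (X ω)) := by
      intro ω _
      rcases hZ ω with h | h <;> simp only [hD ω, h, hZt] <;> norm_num <;> ring
    calc ∑ ω, p ω * (D ω * Zt ω)
        = ∑ ω, (p ω * (Z ω * D1 ω * (1 - e (X ω))) + p ω * (Z ω * D0 ω * e (X ω))
            - p ω * (D0 ω * e (X ω))) := Finset.sum_congr rfl split
      _ = (∑ ω, p ω * (Z ω * D1 ω * (1 - e (X ω)))) + (∑ ω, p ω * (Z ω * D0 ω * e (X ω)))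
            - ∑ ω, p ω * (D0 ω * e (X ω)) := by
          rw [Finset.sum_sub_distrib, Finset.sum_add_distrib]
      _ = (∑ ω, p ω * (e (X ω) * D1 ω * (1 - e (X ω)))) + (∑ ω, p ω * (e (X ω) * D0 ω * e (X ω)))
            - ∑ ω, p ω * (D0 ω * e (X ω)) := by
          rw [s1, s2]
      _ = ∑ ω, p ω * (e (X ω) * (1 - e (X ω)) * (D1 ω - D0 ω)) := by
          rw [← Finset.sum_add_distrib, ← Finset.sum_sub_distrib]
          exact Finset.sum_congr rfl fun ω _ => by ring
  have hNy : ∑ ω, p ω * (Y ω * Zt ω)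
      = ∑ ω, p ω * (e (X ω) * (1 - e (X ω)) * ((Y1 ω - Y0 ω) * (D1 ω - D0 ω))) := by
    have split : ∀ ω ∈ Finset.univ, p ω * (Y ω * Zt ω)
        = p ω * (Z ω * (Y1 ω * D1 ω + Y0 ω * (1 - D1 ω)) * (1 - e (X ω)))
          + p ω * (Z ω * (Y1 ω * D0 ω + Y0 ω * (1 - D0 ω)) * e (X ω))
          - p ω * ((Y1 ω * D0 ω + Y0 ω * (1 - D0 ω)) * e (X ω)) := by
      intro ω _
      rcases hZ ω with h | h <;> rcases hD0 ω with h0 | h0 <;> rcases hD1 ω with h1 | h1 <;>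
        simp only [hY ω, hD ω, h, h0, h1, hZt] <;> norm_num <;> ring
    calc ∑ ω, p ω * (Y ω * Zt ω)
        = ∑ ω, (p ω * (Z ω * (Y1 ω * D1 ω + Y0 ω * (1 - D1 ω)) * (1 - e (X ω)))
            + p ω * (Z ω * (Y1 ω * D0 ω + Y0 ω * (1 - D0 ω)) * e (X ω))
            - p ω * ((Y1 ω * D0 ω + Y0 ω * (1 - D0 ω)) * e (X ω))) := Finset.sum_congr rfl split
      _ = (∑ ω, p ω * (Z ω * (Y1 ω * D1 ω + Y0 ω * (1 - D1 ω)) * (1 - e (X ω))))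
            + (∑ ω, p ω * (Z ω * (Y1 ω * D0 ω + Y0 ω * (1 - D0 ω)) * e (X ω)))
            - ∑ ω, p ω * ((Y1 ω * D0 ω + Y0 ω * (1 - D0 ω)) * e (X ω)) := by
          rw [Finset.sum_sub_distrib, Finset.sum_add_distrib]
      _ = (∑ ω, p ω * (e (X ω) * (Y1 ω * D1 ω + Y0 ω * (1 - D1 ω)) * (1 - e (X ω))))
            + (∑ ω, p ω * (e (X ω) * (Y1 ω * D0 ω + Y0 ω * (1 - D0 ω)) * e (X ω)))
            - ∑ ω, p ω * ((Y1 ω * D0 ω + Y0 ω * (1 - D0 ω)) * e (X ω)) := by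
          rw [s3, s4]
      _ = ∑ ω, p ω * (e (X ω) * (1 - e (X ω)) * ((Y1 ω - Y0 ω) * (D1 ω - D0 ω))) := by
          rw [← Finset.sum_add_distrib, ← Finset.sum_sub_distrib]
          exact Finset.sum_congr rfl fun ω _ => by ring
  rw [hNy, hNd]
  -- per-fiber identification
  have main : ∀ x : Fin k → ℝ, 0 < pprob p (fun ω => X ω = x) →
      ∃ c : ℝ,
        Real.sign (cprob p (fun ω' => D0 ω' ≤ D1 ω') (fun ω' => X ω' = x)
          - cprob p (fun ω' => D1 ω' ≤ D0 ω') (fun ω' => X ω' = x)) = c ∧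
        (∑ ω, if X ω = x then p ω * (D1 ω - D0 ω) else 0)
          = c * pprob p (fun ω => D1 ω ≠ D0 ω ∧ X ω = x) ∧
        (∑ ω, if X ω = x then p ω * ((Y1 ω - Y0 ω) * (D1 ω - D0 ω)) else 0)
          = c * (∑ ω, if D1 ω ≠ D0 ω ∧ X ω = x then p ω * (Y1 ω - Y0 ω) else 0) := by
    intro x hP
    have hJpos : 0 < pprob p (fun ω => D1 ω ≠ D0 ω ∧ X ω = x) := by
      have h3 := (hrel x hP).2.2
      unfold cprob at h3
      rcases div_pos_iff.mp h3 with ⟨hn, _⟩ | ⟨_, hd⟩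
      · exact hn
      · exact absurd hP (not_lt.2 (le_of_lt hd))
    rcases hmono x with hm | hm
    · refine ⟨1, ?_, ?_, ?_⟩
      · have h1 : pprob p (fun ω => D0 ω ≤ D1 ω ∧ X ω = x) = pprob p (fun ω => X ω = x) := by
          unfold pprob
          apply Finset.sum_congr rfl
          intro ω _
          by_cases hx : X ω = x
          · by_cases hd : D0 ω ≤ D1 ω
            · rw [if_pos ⟨hd, hx⟩, if_pos hx]
            · have hpz : p ω = 0 := by
                by_contra hne
                exact hd (hm ω ((hp0 ω).lt_of_ne (Ne.symm hne)) hx)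
              rw [if_neg (fun hc => hd hc.1), if_pos hx, hpz]
          · rw [if_neg (fun hc => hx hc.2), if_neg hx]
        have h2 : pprob p (fun ω => D1 ω ≤ D0 ω ∧ X ω = x)
            + pprob p (fun ω => D1 ω ≠ D0 ω ∧ X ω = x) = pprob p (fun ω => X ω = x) := by
          unfold pprob
          rw [← Finset.sum_add_distrib]
          apply Finset.sum_congr rfl
          intro ω _
          by_cases hx : X ω = x
          · rcases eq_or_ne (p ω) 0 with hpz | hpz
            · simp [hpz]
            · have hd := hm ω ((hp0 ω).lt_of_ne (Ne.symm hpz)) hx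
              by_cases heq : D1 ω = D0 ω
              · rw [if_pos ⟨le_of_eq heq, hx⟩, if_neg (fun hc => hc.1 heq), if_pos hx, add_zero]
              · rw [if_neg (fun hc => heq (le_antisymm hc.1 hd)), if_pos ⟨heq, hx⟩,
                  if_pos hx, zero_add]
          · rw [if_neg (fun hc => hx hc.2), if_neg (fun hc => hx hc.2), if_neg hx, add_zero]
        have hsign : cprob p (fun ω' => D0 ω' ≤ D1 ω') (fun ω' => X ω' = x)
            - cprob p (fun ω' => D1 ω' ≤ D0 ω') (fun ω' => X ω' = x)
            = pprob p (fun ω => D1 ω ≠ D0 ω ∧ X ω = x) / pprob p (fun ω => X ω = x) := by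
          unfold cprob
          rw [h1, div_self (ne_of_gt hP),
            show pprob p (fun ω => D1 ω ≤ D0 ω ∧ X ω = x)
              = pprob p (fun ω => X ω = x) - pprob p (fun ω => D1 ω ≠ D0 ω ∧ X ω = x) from
                by linarith [h2]]
          field_simp
          ring
        rw [hsign]
        exact Real.sign_of_pos (div_pos hJpos hP)
      · rw [pprob_eq, one_mul]
        apply Finset.sum_congr rfl
        intro ω _
        by_cases hx : X ω = x
        · rcases eq_or_ne (p ω) 0 with hpz | hpz
          · simp [hpz]
          · have hd := hm ω ((hp0 ω).lt_of_ne (Ne.symm hpz)) hx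
            rcases hD0 ω with h0 | h0 <;> rcases hD1 ω with h1 | h1
            · rw [if_pos hx, if_neg (fun hc => hc.1 (h1.trans h0.symm)), h0, h1]
              ring
            · rw [if_pos hx, if_pos ⟨fun hc => by rw [h0, h1] at hc; norm_num at hc, hx⟩, h0, h1]
              ring
            · exfalso
              rw [h0, h1] at hd
              norm_num at hd
            · rw [if_pos hx, if_neg (fun hc => hc.1 (h1.trans h0.symm)), h0, h1]
              ring
        · rw [if_neg hx, if_neg (fun hc => hx hc.2)]
      · rw [one_mul]
        apply Finset.sum_congr rfl
        intro ω _
        by_cases hx : X ω = x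
        · rcases eq_or_ne (p ω) 0 with hpz | hpz
          · simp [hpz]
          · have hd := hm ω ((hp0 ω).lt_of_ne (Ne.symm hpz)) hx
            rcases hD0 ω with h0 | h0 <;> rcases hD1 ω with h1 | h1
            · rw [if_pos hx, if_neg (fun hc => hc.1 (h1.trans h0.symm)), h0, h1]
              ring
            · rw [if_pos hx, if_pos ⟨fun hc => by rw [h0, h1] at hc; norm_num at hc, hx⟩, h0, h1]
              ring
            · exfalso
              rw [h0, h1] at hd
              norm_num at hd
            · rw [if_pos hx, if_neg (fun hc => hc.1 (h1.trans h0.symm)), h0, h1]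
              ring
        · rw [if_neg hx, if_neg (fun hc => hx hc.2)]
    · refine ⟨-1, ?_, ?_, ?_⟩
      · have h1 : pprob p (fun ω => D1 ω ≤ D0 ω ∧ X ω = x) = pprob p (fun ω => X ω = x) := by
          unfold pprob
          apply Finset.sum_congr rfl
          intro ω _
          by_cases hx : X ω = x
          · by_cases hd : D1 ω ≤ D0 ω
            · rw [if_pos ⟨hd, hx⟩, if_pos hx]
            · have hpz : p ω = 0 := by
                by_contra hne
                exact hd (hm ω ((hp0 ω).lt_of_ne (Ne.symm hne)) hx)
              rw [if_neg (fun hc => hd hc.1), if_pos hx, hpz]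
          · rw [if_neg (fun hc => hx hc.2), if_neg hx]
        have h2 : pprob p (fun ω => D0 ω ≤ D1 ω ∧ X ω = x)
            + pprob p (fun ω => D1 ω ≠ D0 ω ∧ X ω = x) = pprob p (fun ω => X ω = x) := by
          unfold pprob
          rw [← Finset.sum_add_distrib]
          apply Finset.sum_congr rfl
          intro ω _
          by_cases hx : X ω = x
          · rcases eq_or_ne (p ω) 0 with hpz | hpz
            · simp [hpz]
            · have hd := hm ω ((hp0 ω).lt_of_ne (Ne.symm hpz)) hx
              by_cases heq : D1 ω = D0 ω
              · rw [if_pos ⟨le_of_eq heq.symm, hx⟩, if_neg (fun hc => hc.1 heq), if_pos hx,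
                  add_zero]
              · rw [if_neg (fun hc => heq (le_antisymm hd hc.1)), if_pos ⟨heq, hx⟩,
                  if_pos hx, zero_add]
          · rw [if_neg (fun hc => hx hc.2), if_neg (fun hc => hx hc.2), if_neg hx, add_zero]
        have hsign : cprob p (fun ω' => D0 ω' ≤ D1 ω') (fun ω' => X ω' = x)
            - cprob p (fun ω' => D1 ω' ≤ D0 ω') (fun ω' => X ω' = x)
            = -(pprob p (fun ω => D1 ω ≠ D0 ω ∧ X ω = x) / pprob p (fun ω => X ω = x)) := by
          unfold cprob
          rw [h1, div_self (ne_of_gt hP),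
            show pprob p (fun ω => D0 ω ≤ D1 ω ∧ X ω = x)
              = pprob p (fun ω => X ω = x) - pprob p (fun ω => D1 ω ≠ D0 ω ∧ X ω = x) from
                by linarith [h2]]
          field_simp
          ring
        rw [hsign]
        exact Real.sign_of_neg (neg_lt_zero.mpr (div_pos hJpos hP))
      · rw [pprob_eq, neg_one_mul, ← Finset.sum_neg_distrib]
        apply Finset.sum_congr rfl
        intro ω _
        by_cases hx : X ω = x
        · rcases eq_or_ne (p ω) 0 with hpz | hpz
          · simp [hpz]
          · have hd := hm ω ((hp0 ω).lt_of_ne (Ne.symm hpz)) hx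
            rcases hD0 ω with h0 | h0 <;> rcases hD1 ω with h1 | h1
            · rw [if_pos hx, if_neg (fun hc => hc.1 (h1.trans h0.symm)), h0, h1]
              ring
            · exfalso
              rw [h0, h1] at hd
              norm_num at hd
            · rw [if_pos hx, if_pos ⟨fun hc => by rw [h0, h1] at hc; norm_num at hc, hx⟩, h0, h1]
              ring
            · rw [if_pos hx, if_neg (fun hc => hc.1 (h1.trans h0.symm)), h0, h1]
              ring
        · rw [if_neg hx, if_neg (fun hc => hx hc.2), neg_zero]
      · rw [neg_one_mul, ← Finset.sum_neg_distrib]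
        apply Finset.sum_congr rfl
        intro ω _
        by_cases hx : X ω = x
        · rcases eq_or_ne (p ω) 0 with hpz | hpz
          · simp [hpz]
          · have hd := hm ω ((hp0 ω).lt_of_ne (Ne.symm hpz)) hx
            rcases hD0 ω with h0 | h0 <;> rcases hD1 ω with h1 | h1
            · rw [if_pos hx, if_neg (fun hc => hc.1 (h1.trans h0.symm)), h0, h1]
              ring
            · exfalso
              rw [h0, h1] at hd
              norm_num at hd
            · rw [if_pos hx, if_pos ⟨fun hc => by rw [h0, h1] at hc; norm_num at hc, hx⟩, h0, h1]
              ring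
            · rw [if_pos hx, if_neg (fun hc => hc.1 (h1.trans h0.symm)), h0, h1]
              ring
        · rw [if_neg hx, if_neg (fun hc => hx hc.2), neg_zero]
  -- conditional variance of Z given X = x
  have hVar : ∀ x : Fin k → ℝ, 0 < pprob p (fun ω => X ω = x) →
      condVar p X Z x = e x * (1 - e x) := by
    intro x hP
    have hm : eexp p (fun ω => X ω = x) Z = e x := by
      have h1 := hlin x hP
      unfold condMean at h1
      rw [h1, he]
    unfold condVar evVar
    rw [hm, eexp_eq]
    beta_reduce
    have hnum : (∑ ω, if X ω = x then p ω * (Z ω - e x) ^ 2 else 0)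
        = e x * (1 - e x) * pprob p (fun ω => X ω = x) := by
      have h1 : ∀ ω ∈ Finset.univ, (if X ω = x then p ω * (Z ω - e x) ^ 2 else 0)
          = (1 - 2 * e x) * (if X ω = x then p ω * Z ω else 0)
            + (e x) ^ 2 * (if X ω = x then p ω else 0) := by
        intro ω _
        by_cases hx : X ω = x
        · rw [if_pos hx, if_pos hx, if_pos hx]
          rcases hZ ω with h | h <;> rw [h] <;> ring
        · rw [if_neg hx, if_neg hx, if_neg hx]
          ring
      rw [Finset.sum_congr rfl h1, Finset.sum_add_distrib, ← Finset.mul_sum, ← Finset.mul_sum,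
        hCM x hP, ← pprob_eq]
      ring
    rw [hnum, mul_div_assoc, div_self (ne_of_gt hP), mul_one]
  have hJ : ∀ x : Fin k → ℝ, 0 < pprob p (fun ω => X ω = x) →
      0 < pprob p (fun ω => D1 ω ≠ D0 ω ∧ X ω = x) := by
    intro x hP
    have h3 := (hrel x hP).2.2
    unfold cprob at h3
    rcases div_pos_iff.mp h3 with ⟨hn, _⟩ | ⟨_, hd⟩
    · exact hn
    · exact absurd hP (not_lt.2 (le_of_lt hd))
  have GDen : ∑ ω, p ω * (e (X ω) * (1 - e (X ω)) * (D1 ω - D0 ω))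
      = ∑ ω, p ω *
          (Real.sign (cprob p (fun ω' => D0 ω' ≤ D1 ω') (fun ω' => X ω' = X ω) -
              cprob p (fun ω' => D1 ω' ≤ D0 ω') (fun ω' => X ω' = X ω)) *
            cprob p (fun ω' => D1 ω' ≠ D0 ω') (fun ω' => X ω' = X ω) *
            condVar p X Z (X ω)) := by
    rw [sum_fiber' X (fun ω => p ω * (e (X ω) * (1 - e (X ω)) * (D1 ω - D0 ω))),
      sum_fiber' X (fun ω => p ω *
        (Real.sign (cprob p (fun ω' => D0 ω' ≤ D1 ω') (fun ω' => X ω' = X ω) -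
            cprob p (fun ω' => D1 ω' ≤ D0 ω') (fun ω' => X ω' = X ω)) *
          cprob p (fun ω' => D1 ω' ≠ D0 ω') (fun ω' => X ω' = X ω) *
          condVar p X Z (X ω)))]
    apply Finset.sum_congr rfl
    intro x _
    rcases (hPnn (fun ω => X ω = x)).eq_or_lt with hP | hP
    · rw [Finset.sum_eq_zero (fun ω hω => by
        rw [hsupp x hP.symm ω (Finset.mem_filter.1 hω).2, zero_mul]),
        Finset.sum_eq_zero (fun ω hω => by
        rw [hsupp x hP.symm ω (Finset.mem_filter.1 hω).2, zero_mul])]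
    · obtain ⟨c, hc1, hc2, hc3⟩ := main x hP
      have hLs : ∑ ω ∈ Finset.univ.filter (fun ω => X ω = x),
          p ω * (e (X ω) * (1 - e (X ω)) * (D1 ω - D0 ω))
          = e x * (1 - e x) * ∑ ω, if X ω = x then p ω * (D1 ω - D0 ω) else 0 := by
        rw [Finset.sum_filter, Finset.mul_sum]
        apply Finset.sum_congr rfl
        intro ω _
        by_cases hx : X ω = x
        · rw [if_pos hx, if_pos hx, hx]
          ring
        · rw [if_neg hx, if_neg hx, mul_zero]
      have hRs : ∑ ω ∈ Finset.univ.filter (fun ω => X ω = x),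
          p ω * (Real.sign (cprob p (fun ω' => D0 ω' ≤ D1 ω') (fun ω' => X ω' = X ω) -
              cprob p (fun ω' => D1 ω' ≤ D0 ω') (fun ω' => X ω' = X ω)) *
            cprob p (fun ω' => D1 ω' ≠ D0 ω') (fun ω' => X ω' = X ω) *
            condVar p X Z (X ω))
          = pprob p (fun ω => X ω = x) *
            (Real.sign (cprob p (fun ω' => D0 ω' ≤ D1 ω') (fun ω' => X ω' = x) -
              cprob p (fun ω' => D1 ω' ≤ D0 ω') (fun ω' => X ω' = x)) *
            cprob p (fun ω' => D1 ω' ≠ D0 ω') (fun ω' => X ω' = x) *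
            condVar p X Z x) := by
        rw [Finset.sum_filter, pprob_eq, Finset.sum_mul]
        apply Finset.sum_congr rfl
        intro ω _
        by_cases hx : X ω = x
        · rw [if_pos hx, if_pos hx, hx]
        · rw [if_neg hx, if_neg hx, zero_mul]
      rw [hLs, hRs, hc2, hVar x hP, hc1]
      have hcp : cprob p (fun ω' => D1 ω' ≠ D0 ω') (fun ω' => X ω' = x)
          = pprob p (fun ω => D1 ω ≠ D0 ω ∧ X ω = x) / pprob p (fun ω => X ω = x) := rfl
      rw [hcp]
      have hPne := ne_of_gt hP
      field_simp
  have GNum : ∑ ω, p ω * (e (X ω) * (1 - e (X ω)) * ((Y1 ω - Y0 ω) * (D1 ω - D0 ω)))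
      = ∑ ω, p ω *
          (Real.sign (cprob p (fun ω' => D0 ω' ≤ D1 ω') (fun ω' => X ω' = X ω) -
              cprob p (fun ω' => D1 ω' ≤ D0 ω') (fun ω' => X ω' = X ω)) *
            cprob p (fun ω' => D1 ω' ≠ D0 ω') (fun ω' => X ω' = X ω) *
            condVar p X Z (X ω) *
            eexp p (fun ω' => D1 ω' ≠ D0 ω' ∧ X ω' = X ω) (fun ω' => Y1 ω' - Y0 ω')) := by
    rw [sum_fiber' X (fun ω => p ω * (e (X ω) * (1 - e (X ω)) * ((Y1 ω - Y0 ω) * (D1 ω - D0 ω)))),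
      sum_fiber' X (fun ω => p ω *
        (Real.sign (cprob p (fun ω' => D0 ω' ≤ D1 ω') (fun ω' => X ω' = X ω) -
            cprob p (fun ω' => D1 ω' ≤ D0 ω') (fun ω' => X ω' = X ω)) *
          cprob p (fun ω' => D1 ω' ≠ D0 ω') (fun ω' => X ω' = X ω) *
          condVar p X Z (X ω) *
          eexp p (fun ω' => D1 ω' ≠ D0 ω' ∧ X ω' = X ω) (fun ω' => Y1 ω' - Y0 ω')))]
    apply Finset.sum_congr rfl
    intro x _
    rcases (hPnn (fun ω => X ω = x)).eq_or_lt with hP | hP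
    · rw [Finset.sum_eq_zero (fun ω hω => by
        rw [hsupp x hP.symm ω (Finset.mem_filter.1 hω).2, zero_mul]),
        Finset.sum_eq_zero (fun ω hω => by
        rw [hsupp x hP.symm ω (Finset.mem_filter.1 hω).2, zero_mul])]
    · obtain ⟨c, hc1, hc2, hc3⟩ := main x hP
      have hLs : ∑ ω ∈ Finset.univ.filter (fun ω => X ω = x),
          p ω * (e (X ω) * (1 - e (X ω)) * ((Y1 ω - Y0 ω) * (D1 ω - D0 ω)))
          = e x * (1 - e x) *
            ∑ ω, if X ω = x then p ω * ((Y1 ω - Y0 ω) * (D1 ω - D0 ω)) else 0 := by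
        rw [Finset.sum_filter, Finset.mul_sum]
        apply Finset.sum_congr rfl
        intro ω _
        by_cases hx : X ω = x
        · rw [if_pos hx, if_pos hx, hx]
          ring
        · rw [if_neg hx, if_neg hx, mul_zero]
      have hRs : ∑ ω ∈ Finset.univ.filter (fun ω => X ω = x),
          p ω * (Real.sign (cprob p (fun ω' => D0 ω' ≤ D1 ω') (fun ω' => X ω' = X ω) -
              cprob p (fun ω' => D1 ω' ≤ D0 ω') (fun ω' => X ω' = X ω)) *
            cprob p (fun ω' => D1 ω' ≠ D0 ω') (fun ω' => X ω' = X ω) *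
            condVar p X Z (X ω) *
            eexp p (fun ω' => D1 ω' ≠ D0 ω' ∧ X ω' = X ω) (fun ω' => Y1 ω' - Y0 ω'))
          = pprob p (fun ω => X ω = x) *
            (Real.sign (cprob p (fun ω' => D0 ω' ≤ D1 ω') (fun ω' => X ω' = x) -
              cprob p (fun ω' => D1 ω' ≤ D0 ω') (fun ω' => X ω' = x)) *
            cprob p (fun ω' => D1 ω' ≠ D0 ω') (fun ω' => X ω' = x) *
            condVar p X Z x *
            eexp p (fun ω' => D1 ω' ≠ D0 ω' ∧ X ω' = x) (fun ω' => Y1 ω' - Y0 ω')) := by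
        rw [Finset.sum_filter, pprob_eq, Finset.sum_mul]
        apply Finset.sum_congr rfl
        intro ω _
        by_cases hx : X ω = x
        · rw [if_pos hx, if_pos hx, hx]
        · rw [if_neg hx, if_neg hx, zero_mul]
      have hτ := eexp_eq p (fun ω' => D1 ω' ≠ D0 ω' ∧ X ω' = x) (fun ω' => Y1 ω' - Y0 ω')
      beta_reduce at hτ
      rw [eq_div_iff (ne_of_gt (hJ x hP))] at hτ
      rw [hLs, hRs, hc3, hVar x hP, hc1, ← hτ]
      have hcp : cprob p (fun ω' => D1 ω' ≠ D0 ω') (fun ω' => X ω' = x)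
          = pprob p (fun ω => D1 ω ≠ D0 ω ∧ X ω = x) / pprob p (fun ω => X ω = x) := rfl
      rw [hcp]
      have hPne := ne_of_gt hP
      field_simp
  simp only [pexp]
  rw [GNum, GDen]
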